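/- Let n ≥ 1 and d ≥ 1. If C ⊆ X^n is a code whose distinct words are at pairwise Hamming distance at least d, and A ⊆ X^n is a set of diameter at most d − 1 (every two of its elements are at Hamming distance at most d − 1), then |C| · |A| ≤ n · 2^(n−1). -/

import Mathlib

open Finset

/-- A ternary word has exactly one coordinate equal to 0 (the `*` symbol). -/
def exactlyOneStar {n : ℕ} (x : Fin n → Fin 3) : Prop :=
  (Finset.univ.filter (fun i => x i = 0)).card = 1

namespace CodeAnticode

instance {n : ℕ} : DecidablePred (exactlyOneStar (n := n)) := fun x => by
  unfold exactlyOneStar; infer_instance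

/-- Possibly swap the symbols `1` and `2` of `Fin 3`, fixing `0`. -/
def tw (b : Bool) : Equiv.Perm (Fin 3) := if b then Equiv.swap 1 2 else 1

lemma tw_zero (b : Bool) : tw b 0 = 0 := by cases b <;> decide

lemma tw_tw (b : Bool) (v : Fin 3) : tw b (tw b v) = v := by
  cases b <;> revert v <;> decide

lemma tw_xor (b c : Bool) (v : Fin 3) : tw (xor b c) v = tw b (tw c v) := by
  cases b <;> cases c <;> revert v <;> decide

lemma tw_decide (u v : Fin 3) (hu : u ≠ 0) (hv : v ≠ 0) : tw (decide (u ≠ v)) u = v := by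
  revert u v; decide

lemma tw_zero_iff (b : Bool) (v : Fin 3) : tw b v = 0 ↔ v = 0 := by
  cases b <;> revert v <;> decide

variable {n : ℕ}

/-- Group elements: a coordinate permutation together with per-coordinate swaps. -/
abbrev G (n : ℕ) := Equiv.Perm (Fin n) × (Fin n → Bool)

def act (g : G n) (x : Fin n → Fin 3) : Fin n → Fin 3 :=
  fun i => tw (g.2 i) (x (g.1.symm i))

def ginv (g : G n) : G n := (g.1⁻¹, fun i => g.2 (g.1 i))
def gmul (g h : G n) : G n := (g.1 * h.1, fun i => xor (g.2 i) (h.2 (g.1.symm i)))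

lemma perm_inv_symm (a : Equiv.Perm (Fin n)) : (a⁻¹ : Equiv.Perm (Fin n)).symm = a := by
  rw [← Equiv.Perm.inv_def]; simp

lemma perm_mul_symm (a b : Equiv.Perm (Fin n)) (i : Fin n) :
    (a * b).symm i = b.symm (a.symm i) := by
  rw [← Equiv.Perm.inv_def, mul_inv_rev, Equiv.Perm.mul_apply,
    Equiv.Perm.inv_def, Equiv.Perm.inv_def]

lemma act_ginv_act (g : G n) (x : Fin n → Fin 3) : act (ginv g) (act g x) = x := by
  funext i
  show tw (g.2 (g.1 i)) (act g x ((g.1⁻¹).symm i)) = x i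
  rw [perm_inv_symm]
  show tw (g.2 (g.1 i)) (tw (g.2 (g.1 i)) (x (g.1.symm (g.1 i)))) = x i
  rw [tw_tw, Equiv.symm_apply_apply]

lemma act_act_ginv (g : G n) (x : Fin n → Fin 3) : act g (act (ginv g) x) = x := by
  funext i
  show tw (g.2 i) (act (ginv g) x (g.1.symm i)) = x i
  show tw (g.2 i) (tw (g.2 (g.1 (g.1.symm i))) (x ((g.1⁻¹).symm (g.1.symm i)))) = x i
  rw [perm_inv_symm, Equiv.apply_symm_apply, tw_tw]

lemma act_gmul (g h : G n) (x : Fin n → Fin 3) :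
    act (gmul g h) x = act g (act h x) := by
  funext i
  show tw (xor (g.2 i) (h.2 (g.1.symm i))) (x ((g.1 * h.1).symm i))
      = tw (g.2 i) (tw (h.2 (g.1.symm i)) (x (h.1.symm (g.1.symm i))))
  rw [perm_mul_symm, tw_xor]

/-- The action as a permutation of words. -/
def Ψ (g : G n) : Equiv.Perm (Fin n → Fin 3) where
  toFun := act g
  invFun := act (ginv g)
  left_inv := act_ginv_act g
  right_inv := act_act_ginv g

noncomputable def M (n : ℕ) : Finset (Equiv.Perm (Fin n → Fin 3)) := by
  classical exact (univ : Finset (G n)).image Ψ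

lemma mem_M {e : Equiv.Perm (Fin n → Fin 3)} :
    e ∈ M n ↔ ∃ g : G n, Ψ g = e := by
  classical
  simp [M]

lemma one_mem_M : (1 : Equiv.Perm (Fin n → Fin 3)) ∈ M n := by
  rw [mem_M]
  refine ⟨(1, fun _ => false), Equiv.ext fun x => funext fun i => ?_⟩
  show tw false (x ((1 : Equiv.Perm (Fin n)).symm i)) = x i
  rfl

lemma mul_mem_M {e f : Equiv.Perm (Fin n → Fin 3)} (he : e ∈ M n) (hf : f ∈ M n) :
    e * f ∈ M n := by
  rw [mem_M] at he hf ⊢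
  obtain ⟨g, rfl⟩ := he; obtain ⟨h, rfl⟩ := hf
  exact ⟨gmul g h, Equiv.ext fun x => (act_gmul g h x)⟩

lemma inv_mem_M {e : Equiv.Perm (Fin n → Fin 3)} (he : e ∈ M n) : e⁻¹ ∈ M n := by
  rw [mem_M] at he ⊢
  obtain ⟨g, rfl⟩ := he
  refine ⟨ginv g, Equiv.ext fun x => ?_⟩
  have : (Ψ g) (act (ginv g) x) = x := act_act_ginv g x
  calc (Ψ (ginv g)) x = (Ψ g)⁻¹ ((Ψ g) (act (ginv g) x)) := by
        rw [Equiv.Perm.inv_def, Equiv.symm_apply_apply]; rfl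
    _ = (Ψ g)⁻¹ x := by rw [this]

lemma hammingDist_act (g : G n) (x y : Fin n → Fin 3) :
    hammingDist (act g x) (act g y) = hammingDist x y := by
  show (univ.filter fun i => act g x i ≠ act g y i).card
      = (univ.filter fun i => x i ≠ y i).card
  refine Finset.card_equiv g.1.symm fun i => ?_
  simp only [mem_filter, mem_univ, true_and]
  show (act g x i ≠ act g y i) ↔ (x (g.1.symm i) ≠ y (g.1.symm i))
  show (tw (g.2 i) (x (g.1.symm i)) ≠ tw (g.2 i) (y (g.1.symm i)))
      ↔ (x (g.1.symm i) ≠ y (g.1.symm i))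
  constructor
  · intro h hc; exact h (by rw [hc])
  · intro h hc; exact h ((tw (g.2 i)).injective hc)

lemma star_act (g : G n) (x : Fin n → Fin 3) (hx : exactlyOneStar x) :
    exactlyOneStar (act g x) := by
  unfold exactlyOneStar at hx ⊢
  rw [← hx]
  refine Finset.card_equiv g.1.symm fun i => ?_
  simp only [mem_filter, mem_univ, true_and]
  show act g x i = 0 ↔ x (g.1.symm i) = 0
  show tw (g.2 i) (x (g.1.symm i)) = 0 ↔ x (g.1.symm i) = 0
  rw [tw_zero_iff]

lemma star_filter_eq {x : Fin n → Fin 3} {i : Fin n}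
    (hx : exactlyOneStar x) (hi : x i = 0) :
    univ.filter (fun j => x j = 0) = {i} := by
  obtain ⟨a, ha⟩ := Finset.card_eq_one.mp hx
  have : i ∈ univ.filter (fun j => x j = 0) := by simp [hi]
  rw [ha] at this
  rw [ha, Finset.mem_singleton.mp this]

lemma star_exists {x : Fin n → Fin 3} (hx : exactlyOneStar x) :
    ∃ i, x i = 0 ∧ ∀ j, j ≠ i → x j ≠ 0 := by
  obtain ⟨a, ha⟩ := Finset.card_eq_one.mp hx
  refine ⟨a, ?_, ?_⟩
  · have : a ∈ univ.filter (fun j => x j = 0) := by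
      rw [ha]; exact Finset.mem_singleton_self a
    exact (mem_filter.mp this).2
  · intro j hj h0
    have : j ∈ univ.filter (fun j => x j = 0) := by simp [h0]
    rw [ha] at this
    exact hj (Finset.mem_singleton.mp this)

lemma star_of {x : Fin n → Fin 3} (i : Fin n) (h0 : x i = 0)
    (h1 : ∀ j, j ≠ i → x j ≠ 0) : exactlyOneStar x := by
  unfold exactlyOneStar
  have : univ.filter (fun j => x j = 0) = {i} := by
    ext j
    simp only [mem_filter, mem_univ, true_and, Finset.mem_singleton]
    constructor
    · intro h; by_contra hj; exact h1 j hj h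
    · rintro rfl; exact h0
  rw [this, Finset.card_singleton]

/-- Transitivity of the action on words with exactly one star. -/
lemma star_transitive {x y : Fin n → Fin 3}
    (hx : exactlyOneStar x) (hy : exactlyOneStar y) :
    ∃ g : G n, act g x = y := by
  obtain ⟨i, hi0, hi1⟩ := star_exists hx
  obtain ⟨j, hj0, hj1⟩ := star_exists hy
  refine ⟨(Equiv.swap i j, fun k => decide (x (Equiv.swap i j k) ≠ y k)), ?_⟩
  funext k
  show tw (decide (x (Equiv.swap i j k) ≠ y k)) (x ((Equiv.swap i j).symm k)) = y k
  rw [Equiv.symm_swap]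
  by_cases hk : k = j
  · subst hk
    rw [Equiv.swap_apply_right, hi0, tw_zero, hj0]
  · have hski : Equiv.swap i j k ≠ i := by
      intro h
      have := (Equiv.swap i j).injective (h.trans (Equiv.swap_apply_right i j).symm)
      exact hk this
    exact tw_decide _ _ (hi1 _ hski) (hj1 _ hk)

/-- Number of group elements taking `x` to `y`. -/
noncomputable def N (x y : Fin n → Fin 3) : ℕ := ((M n).filter fun e => e x = y).card

lemma N_const {x y x' y' : Fin n → Fin 3}
    (hx : exactlyOneStar x) (hy : exactlyOneStar y)
    (hx' : exactlyOneStar x') (hy' : exactlyOneStar y') :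
    N x y = N x' y' := by
  classical
  obtain ⟨g, hg⟩ := star_transitive hx' hx
  obtain ⟨h, hh⟩ := star_transitive hy' hy
  have hGmem : Ψ g ∈ M n := mem_M.mpr ⟨g, rfl⟩
  have hHmem : Ψ h ∈ M n := mem_M.mpr ⟨h, rfl⟩
  set Gp := Ψ g with hGp
  set Hp := Ψ h with hHp
  have hG : Gp x' = x := hg
  have hH : Hp y' = y := hh
  unfold N
  refine Finset.card_bij' (fun e _ => Hp⁻¹ * e * Gp) (fun e _ => Hp * e * Gp⁻¹)
    ?_ ?_ ?_ ?_
  · intro e he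
    rw [mem_filter] at he ⊢
    refine ⟨mul_mem_M (mul_mem_M (inv_mem_M hHmem) he.1) hGmem, ?_⟩
    show Hp⁻¹ (e (Gp x')) = y'
    rw [hG, he.2, ← hH, Equiv.Perm.inv_def, Equiv.symm_apply_apply]
  · intro e he
    rw [mem_filter] at he ⊢
    refine ⟨mul_mem_M (mul_mem_M hHmem he.1) (inv_mem_M hGmem), ?_⟩
    show Hp (e (Gp⁻¹ x)) = y
    rw [← hG, Equiv.Perm.inv_def, Equiv.symm_apply_apply, he.2, hH]
  · intro e _; group
  · intro e _; group

lemma M_preserves_dist {e : Equiv.Perm (Fin n → Fin 3)} (he : e ∈ M n)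
    (x y : Fin n → Fin 3) : hammingDist (e x) (e y) = hammingDist x y := by
  obtain ⟨g, rfl⟩ := mem_M.mp he
  exact hammingDist_act g x y

lemma M_preserves_star {e : Equiv.Perm (Fin n → Fin 3)} (he : e ∈ M n)
    {x : Fin n → Fin 3} (hx : exactlyOneStar x) : exactlyOneStar (e x) := by
  obtain ⟨g, rfl⟩ := mem_M.mp he
  exact star_act g x hx

/-- The number of boolean vectors vanishing at a fixed coordinate. -/
lemma card_bool_filter (hn : 1 ≤ n) (i : Fin n) :
    ((univ : Finset (Fin n → Bool)).filter fun b => b i = false).card = 2 ^ (n - 1) := by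
  classical
  set s := (univ : Finset (Fin n → Bool)).filter fun b => b i = false with hs
  set t := (univ : Finset (Fin n → Bool)).filter fun b => ¬ (b i = false) with ht
  have hst : s.card = t.card := by
    refine Finset.card_bij' (fun b _ => Function.update b i true)
      (fun b _ => Function.update b i false) ?_ ?_ ?_ ?_
    · intro b hb
      simp [ht, Function.update_self]
    · intro b hb
      simp [hs, Function.update_self]
    · intro b hb
      rw [hs, mem_filter] at hb
      show Function.update (Function.update b i true) i false = b
      rw [Function.update_idem, ← hb.2, Function.update_eq_self]
    · intro b hb
      rw [ht, mem_filter] at hb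
      have hbi : b i = true := by simpa using hb.2
      show Function.update (Function.update b i false) i true = b
      rw [Function.update_idem, ← hbi, Function.update_eq_self]
  have hsum : s.card + t.card = 2 ^ n := by
    rw [hs, ht, Finset.card_filter_add_card_filter_not]
    simp [Finset.card_univ]
  have h2 : 2 ^ n = 2 * 2 ^ (n - 1) := by
    have hn' : n - 1 + 1 = n := Nat.succ_pred_eq_of_pos hn
    calc 2 ^ n = 2 ^ (n - 1 + 1) := by rw [hn']
      _ = 2 * 2 ^ (n - 1) := by rw [pow_succ]; ring
  omega

lemma decide_two (v : Fin 3) (hv : v ≠ 0) :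
    (if decide (v = 2) = true then (2 : Fin 3) else 1) = v := by
  revert v; decide

/-- Number of words with a star exactly at coordinate `i`. -/
lemma card_star_at (hn : 1 ≤ n) (i : Fin n) :
    ((univ : Finset (Fin n → Fin 3)).filter fun x => exactlyOneStar x ∧ x i = 0).card
      = 2 ^ (n - 1) := by
  classical
  rw [← card_bool_filter hn i]
  refine Finset.card_bij'
    (fun x _ => fun j => decide (x j = 2))
    (fun b _ => fun j => if j = i then 0 else if b j then 2 else 1) ?_ ?_ ?_ ?_
  · intro x hx
    rw [mem_filter] at hx
    simp only [mem_filter, mem_univ, true_and]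
    rw [hx.2.2]; decide
  · intro b hb
    simp only [mem_filter, mem_univ, true_and]
    constructor
    · refine star_of i (by simp) fun j hj => ?_
      simp only [if_neg hj]
      by_cases h : b j <;> simp [h] <;> decide
    · simp
  · intro x hx
    rw [mem_filter] at hx
    funext j
    by_cases hj : j = i
    · subst hj; simp [hx.2.2]
    · simp only [if_neg hj]
      obtain ⟨k, hk0, hk1⟩ := star_exists hx.2.1
      have hik : i = k := by
        by_contra h; exact hk1 i h hx.2.2
      have hxj : x j ≠ 0 := hk1 j (by rw [← hik]; exact hj)
      exact decide_two (x j) hxj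
  · intro b hb
    rw [mem_filter] at hb
    funext j
    by_cases hj : j = i
    · subst hj
      simp [hb.2]
    · simp only [if_neg hj]
      by_cases h : b j <;> simp [h] <;> decide

/-- The total number of words with exactly one star. -/
lemma card_X (hn : 1 ≤ n) :
    ((univ : Finset (Fin n → Fin 3)).filter exactlyOneStar).card = n * 2 ^ (n - 1) := by
  classical
  set X := (univ : Finset (Fin n → Fin 3)).filter exactlyOneStar with hX
  have h1 : X.card = ∑ x ∈ X, ((univ : Finset (Fin n)).filter fun i => x i = 0).card := by
    rw [Finset.card_eq_sum_ones]
    refine Finset.sum_congr rfl fun x hx => ?_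
    rw [hX, mem_filter] at hx
    exact hx.2.symm
  have h2 : ∀ x : Fin n → Fin 3, ((univ : Finset (Fin n)).filter fun i => x i = 0).card
      = ∑ i : Fin n, if x i = 0 then 1 else 0 := fun x => Finset.card_filter _ _
  rw [h1]
  simp_rw [h2]
  rw [Finset.sum_comm]
  have h3 : ∀ i : Fin n, (∑ x ∈ X, if x i = 0 then 1 else 0)
      = ((univ : Finset (Fin n → Fin 3)).filter fun x => exactlyOneStar x ∧ x i = 0).card := by
    intro i
    rw [Finset.card_filter, hX, Finset.sum_filter]
    refine Finset.sum_congr rfl fun x _ => ?_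
    by_cases h : exactlyOneStar x <;> by_cases h' : x i = 0 <;> simp [h, h']
  calc (∑ i : Fin n, ∑ x ∈ X, if x i = 0 then 1 else 0)
      = ∑ i : Fin n, 2 ^ (n - 1) := by
        refine Finset.sum_congr rfl fun i _ => ?_
        rw [h3 i, card_star_at hn i]
    _ = n * 2 ^ (n - 1) := by
        rw [Finset.sum_const, Finset.card_univ, Fintype.card_fin, smul_eq_mul]

end CodeAnticode

open CodeAnticode in
/-- Code–anticode bound in `Xⁿ`: if `C ⊆ Xⁿ` has minimum distance at least `d`
and `A ⊆ Xⁿ` has diameter at most `d - 1`, then `|C|·|A| ≤ n·2^(n-1) = |Xⁿ|`. -/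
theorem code_anticode_bound (n d : ℕ) (hn : 1 ≤ n) (hd : 1 ≤ d)
    (C A : Finset (Fin n → Fin 3))
    (hCX : ∀ x ∈ C, exactlyOneStar x)
    (hAX : ∀ x ∈ A, exactlyOneStar x)
    (hCdist : ∀ x ∈ C, ∀ y ∈ C, x ≠ y → d ≤ hammingDist x y)
    (hAdiam : ∀ x ∈ A, ∀ y ∈ A, hammingDist x y ≤ d - 1) :
    C.card * A.card ≤ n * 2 ^ (n - 1) := by
  classical
  -- base point
  set x0 : Fin n → Fin 3 := fun i => if i = ⟨0, hn⟩ then 0 else 1 with hx0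
  have hx0star : exactlyOneStar x0 := by
    refine star_of ⟨0, hn⟩ (by simp [hx0]) fun j hj => ?_
    simp [hx0, if_neg hj]
  set X := (univ : Finset (Fin n → Fin 3)).filter exactlyOneStar with hX
  set S := N x0 x0 with hS
  -- each translate of C meets A in at most one point
  have key : ∀ e ∈ M n, ((C ×ˢ A).filter fun p => e p.1 = p.2).card ≤ 1 := by
    intro e he
    refine Finset.card_le_one.mpr fun p hp q hq => ?_
    rw [mem_filter, Finset.mem_product] at hp hq
    obtain ⟨⟨hpC, hpA⟩, hpe⟩ := hp
    obtain ⟨⟨hqC, hqA⟩, hqe⟩ := hq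
    have hcc : p.1 = q.1 := by
      by_contra hne
      have h1 : d ≤ hammingDist p.1 q.1 := hCdist _ hpC _ hqC hne
      have h2 : hammingDist (e p.1) (e q.1) = hammingDist p.1 q.1 :=
        M_preserves_dist he _ _
      have h3 : hammingDist (e p.1) (e q.1) ≤ d - 1 := by
        rw [hpe, hqe]; exact hAdiam _ hpA _ hqA
      omega
    have : p.2 = q.2 := by rw [← hpe, ← hqe, hcc]
    exact Prod.ext hcc this
  -- double counting
  have count1 : (∑ p ∈ C ×ˢ A, N p.1 p.2) ≤ (M n).card := by
    have h1 : (∑ p ∈ C ×ˢ A, N p.1 p.2)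
        = ∑ e ∈ M n, ((C ×ˢ A).filter fun p => e p.1 = p.2).card := by
      unfold N
      simp_rw [Finset.card_filter]
      exact Finset.sum_comm
    rw [h1]
    calc (∑ e ∈ M n, ((C ×ˢ A).filter fun p => e p.1 = p.2).card)
        ≤ ∑ _e ∈ M n, 1 := Finset.sum_le_sum key
      _ = (M n).card := by rw [Finset.sum_const, smul_eq_mul, mul_one]
  -- each N over pairs from C × A equals S
  have count2 : (∑ p ∈ C ×ˢ A, N p.1 p.2) = C.card * A.card * S := by
    have : ∀ p ∈ C ×ˢ A, N p.1 p.2 = S := by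
      intro p hp
      rw [Finset.mem_product] at hp
      exact N_const (hCX _ hp.1) (hAX _ hp.2) hx0star hx0star
    rw [Finset.sum_congr rfl this, Finset.sum_const, Finset.card_product, smul_eq_mul]
  -- orbit–stabilizer: |M| = |X| * S
  have orbit : (M n).card = X.card * S := by
    have h1 : (M n).card = ∑ y ∈ X, ((M n).filter fun e => e x0 = y).card := by
      refine Finset.card_eq_sum_card_fiberwise fun e he => ?_
      rw [hX, Finset.mem_coe, mem_filter]
      exact ⟨Finset.mem_univ _, M_preserves_star he hx0star⟩
    rw [h1]
    have h2 : ∀ y ∈ X, ((M n).filter fun e => e x0 = y).card = S := by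
      intro y hy
      rw [hX, mem_filter] at hy
      exact N_const hx0star hy.2 hx0star hx0star
    rw [Finset.sum_congr rfl h2, Finset.sum_const, smul_eq_mul]
  -- S is positive
  have hSpos : 1 ≤ S := by
    rw [hS]
    unfold N
    refine Finset.card_pos.mpr ⟨1, ?_⟩
    rw [mem_filter]
    exact ⟨one_mem_M, rfl⟩
  -- conclude
  have hle : C.card * A.card * S ≤ X.card * S := by
    rw [← count2, ← orbit]; exact count1
  have : C.card * A.card ≤ X.card := Nat.le_of_mul_le_mul_right hle hSpos
  rwa [hX, card_X hn] at this
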